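/- Let K ⊆ ℝ≥0 be countable with 0 ∈ K a non-isolated point of K. Then the space U(K) of compact ultrametric spaces whose metrics take values in K, with the ultrametric Gromov–Hausdorff metric, is nowhere locally compact: no point of U(K) has a compact neighborhood. -/

import Mathlib

open Metric Set

noncomputable section GHuAux

variable {X : Type} [MetricSpace X]

/-- Auxiliary distance on `X ⊕ Fin n` : the `Fin n` points are at mutual distance `c`,
and at distance `max c (dist x a0)` from a point `x` of `X`. -/
def sDist (c : ℝ) (a0 : X) {n : ℕ} : (X ⊕ Fin n) → (X ⊕ Fin n) → ℝ
  | .inl x, .inl y => dist x y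
  | .inl x, .inr _ => max c (dist x a0)
  | .inr _, .inl y => max c (dist y a0)
  | .inr i, .inr j => if i = j then 0 else c

variable {c : ℝ} {a0 : X} {n : ℕ}

lemma sDist_self (u : X ⊕ Fin n) : sDist c a0 u u = 0 := by
  cases u <;> simp [sDist]

lemma sDist_comm (u v : X ⊕ Fin n) : sDist c a0 u v = sDist c a0 v u := by
  cases u with
  | inl x => cases v with
    | inl y => simp [sDist, dist_comm]
    | inr j => rfl
  | inr i => cases v with
    | inl y => rfl
    | inr j =>
      simp only [sDist]
      by_cases h : i = j
      · simp [h]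
      · simp [h, Ne.symm h]

lemma sDist_nonneg (hc : 0 ≤ c) (u v : X ⊕ Fin n) : 0 ≤ sDist c a0 u v := by
  cases u <;> cases v <;> simp [sDist, hc, le_max_iff, dist_nonneg]
  split <;> simp [hc]

lemma sDist_max [IsUltrametricDist X] (hc : 0 ≤ c) (u v w : X ⊕ Fin n) :
    sDist c a0 u w ≤ max (sDist c a0 u v) (sDist c a0 v w) := by
  cases u with
  | inl x => cases v with
    | inl y => cases w with
      | inl z => exact IsUltrametricDist.dist_triangle_max x y z
      | inr k =>
        simp only [sDist]
        apply max_le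
        · exact le_max_of_le_right (le_max_left _ _)
        · exact le_trans (IsUltrametricDist.dist_triangle_max x y a0)
            (max_le_max le_rfl (le_max_right _ _))
    | inr i => cases w with
      | inl z =>
        simp only [sDist]
        refine le_trans (IsUltrametricDist.dist_triangle_max x a0 z) ?_
        apply max_le_max (le_max_right _ _)
        rw [dist_comm]; exact le_max_right _ _
      | inr k => exact le_max_left _ _
  | inr i => cases v with
    | inl y => cases w with
      | inl z =>
        simp only [sDist]
        apply max_le
        · exact le_max_of_le_left (le_max_left _ _)
        · have h1 : dist z a0 ≤ max (dist y z) (dist y a0) := by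
            have := IsUltrametricDist.dist_triangle_max z y a0
            rwa [dist_comm z y] at this
          exact le_trans h1 (max_le (le_max_right _ _)
            (le_max_of_le_left (le_max_right _ _)))
      | inr k =>
        simp only [sDist]
        have : sDist c a0 (Sum.inr i : X ⊕ Fin n) (Sum.inr k) ≤ c := by
          simp only [sDist]; split <;> simp [hc]
        refine le_trans this (le_max_of_le_left (le_max_left _ _))
    | inr j => cases w with
      | inl z => exact le_max_right _ _
      | inr k =>
        simp only [sDist]
        split
        · exact le_max_of_le_left (by split; exacts [le_rfl, hc])
        · rename_i hik
          rcases Classical.em (i = j) with rfl | hij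
          · rw [if_neg hik]; exact le_max_right _ _
          · rw [if_neg hij]; exact le_max_left _ _

/-- The metric space structure on `X ⊕ Fin n` induced by `sDist`. -/
def sMS [IsUltrametricDist X] (c : ℝ) (hc : 0 < c) (a0 : X) (n : ℕ) :
    MetricSpace (X ⊕ Fin n) where
  dist := sDist c a0
  dist_self := sDist_self
  dist_comm := sDist_comm
  dist_triangle u v w := le_trans (sDist_max hc.le u v w)
    (max_le (le_add_of_nonneg_right (sDist_nonneg hc.le _ _))
      (le_add_of_nonneg_left (sDist_nonneg hc.le _ _)))
  eq_of_dist_eq_zero := by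
    intro u v h
    replace h : sDist c a0 u v = 0 := h
    cases u with
    | inl x => cases v with
      | inl y => exact congrArg Sum.inl (eq_of_dist_eq_zero h)
      | inr j =>
        exfalso
        have : c ≤ sDist c a0 (Sum.inl x : X ⊕ Fin n) (Sum.inr j) := le_max_left _ _
        rw [h] at this; linarith
    | inr i => cases v with
      | inl y =>
        exfalso
        have : c ≤ sDist c a0 (Sum.inr i : X ⊕ Fin n) (Sum.inl y) := le_max_left _ _
        rw [h] at this; linarith
      | inr j =>
        simp only [sDist] at h
        by_cases hij : i = j
        · exact congrArg Sum.inr hij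
        · rw [if_neg hij] at h; exact absurd h (by linarith)

/-- The finite subset of `X ⊕ Fin n` consisting of the net `s` and the `n` extra points. -/
def Fnet (s : Finset X) (n : ℕ) : Finset (X ⊕ Fin n) :=
  (s.map ⟨Sum.inl, Sum.inl_injective⟩).disjUnion
    (Finset.univ.map ⟨Sum.inr, Sum.inr_injective⟩) (by
    refine Finset.disjoint_left.mpr ?_
    rintro u hu hv
    simp only [Finset.mem_map, Function.Embedding.coeFn_mk] at hu hv
    obtain ⟨a, -, rfl⟩ := hu
    obtain ⟨i, -, h⟩ := hv
    exact Sum.inr_ne_inl h)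

/-- The space `Y n` : the net `s` with `n` extra points attached. -/
abbrev Ysp (s : Finset X) (n : ℕ) : Type := {z : X ⊕ Fin n // z ∈ Fnet s n}

lemma Fnet_card (s : Finset X) (n : ℕ) : (Fnet s n).card = s.card + n := by
  unfold Fnet
  rw [Finset.card_disjUnion, Finset.card_map, Finset.card_map, Finset.card_univ,
    Fintype.card_fin]

/-- The points of `Ysp s n` are pairwise `c`-separated, provided the net `s` is. -/
lemma Ysp_sep [IsUltrametricDist X] {c : ℝ} (hc : 0 < c) {a0 : X} {s : Finset X}
    (hsep : ∀ a ∈ s, ∀ b ∈ s, a ≠ b → c ≤ dist a b) (n : ℕ) :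
    letI : MetricSpace (X ⊕ Fin n) := sMS c hc a0 n
    ∀ y y' : Ysp s n, y ≠ y' → c ≤ dist y y' := by
  letI : MetricSpace (X ⊕ Fin n) := sMS c hc a0 n
  rintro ⟨u, hu⟩ ⟨v, hv⟩ hyy'
  have huv : u ≠ v := fun h => hyy' (Subtype.ext h)
  show c ≤ sDist c a0 u v
  simp only [Fnet, Finset.mem_disjUnion, Finset.mem_map, Function.Embedding.coeFn_mk] at hu hv
  rcases hu with ⟨a, ha, rfl⟩ | ⟨i, -, rfl⟩ <;> rcases hv with ⟨b, hb, rfl⟩ | ⟨j, -, rfl⟩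
  · exact hsep a ha b hb fun h => huv (congrArg Sum.inl h)
  · exact le_max_left _ _
  · exact le_max_left _ _
  · have hij : i ≠ j := fun h => huv (congrArg Sum.inr h)
    show c ≤ sDist c a0 (Sum.inr i : X ⊕ Fin n) (Sum.inr j)
    rw [sDist, if_neg hij]

/-- The inclusion of `Ysp s k` into `X ⊕ Fin N` for `k ≤ N` is isometric. -/
lemma sMap_isometry [IsUltrametricDist X] {c : ℝ} (hc : 0 < c) {a0 : X} {s : Finset X}
    {k N : ℕ} (hk : k ≤ N) :
    letI : MetricSpace (X ⊕ Fin k) := sMS c hc a0 k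
    letI : MetricSpace (X ⊕ Fin N) := sMS c hc a0 N
    Isometry (fun y : Ysp s k => (Sum.map id (Fin.castLE hk) y.1 : X ⊕ Fin N)) := by
  letI : MetricSpace (X ⊕ Fin k) := sMS c hc a0 k
  letI : MetricSpace (X ⊕ Fin N) := sMS c hc a0 N
  apply Isometry.of_dist_eq
  rintro ⟨u, hu⟩ ⟨v, hv⟩
  show sDist c a0 (Sum.map id (Fin.castLE hk) u) (Sum.map id (Fin.castLE hk) v)
    = sDist c a0 u v
  rcases u with x | i <;> rcases v with y | j <;> simp [sDist, Fin.castLE_inj]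

/-- In an ultrametric space, a `c`-separated finite family transfers through
a Hausdorff-distance-`< c/2` correspondence, giving a cardinality inequality. -/
lemma card_le_of_sep {A B Z : Type*} [MetricSpace A] [MetricSpace B] [MetricSpace Z]
    [IsUltrametricDist Z] [Fintype A] [Fintype B] {c : ℝ} (hc : 0 < c)
    (hA : ∀ a a' : A, a ≠ a' → c ≤ dist a a')
    (i : A → Z) (j : B → Z) (hi : Isometry i)
    (fin : EMetric.hausdorffEdist (range i) (range j) ≠ ⊤)
    (h : hausdorffDist (range i) (range j) < c / 2) :
    Fintype.card A ≤ Fintype.card B := by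
  have H : ∀ a : A, ∃ b : B, dist (i a) (j b) < c / 2 := by
    intro a
    obtain ⟨z, ⟨b, rfl⟩, hz⟩ := exists_dist_lt_of_hausdorffDist_lt (mem_range_self (f := i) a) h fin
    exact ⟨b, hz⟩
  choose φ hφ using H
  apply Fintype.card_le_of_injective φ
  intro a a' he
  by_contra hne
  have h1 := hA a a' hne
  have h2 : dist (i a) (i a') ≤ max (dist (i a) (j (φ a))) (dist (j (φ a)) (i a')) :=
    IsUltrametricDist.dist_triangle_max _ _ _
  rw [hi.dist_eq] at h2
  have h3 : dist (j (φ a)) (i a') < c / 2 := by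
    rw [he, dist_comm]; exact hφ a'
  have : dist a a' < c := lt_of_le_of_lt h2 (max_lt (by linarith [hφ a]) (by linarith))
  linarith

end GHuAux

/-- The ultrametric Gromov–Hausdorff distance: infimum of Hausdorff distances between
isometric copies of `X` and `Y` inside a common ultrametric space. -/
noncomputable def GHuDist (X Y : Type*) [MetricSpace X] [MetricSpace Y] : ℝ :=
  sInf { r : ℝ | ∃ (Z : Type) (_ : MetricSpace Z), IsUltrametricDist Z ∧
    ∃ (i : X → Z) (j : Y → Z), Isometry i ∧ Isometry j ∧
      Metric.hausdorffDist (Set.range i) (Set.range j) = r }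

/-- For countable `K ⊆ ℝ≥0` with `0 ∈ K` non-isolated, the space `U(K)` of compact
ultrametric spaces with distances in `K` is nowhere locally compact: arbitrarily close
to any `X ∈ U(K)` there is an infinite uniformly separated family in `U(K)`,
so no point of `U(K)` has a compact neighborhood. -/
theorem UK_nowhere_locally_compact (K : Set ℝ) (hKc : K.Countable) (hK0 : (0:ℝ) ∈ K)
    (hKnn : ∀ x ∈ K, 0 ≤ x) (hKacc : ∀ δ : ℝ, 0 < δ → ∃ x ∈ K, 0 < x ∧ x < δ)
    (X : Type) [MetricSpace X] [CompactSpace X] [Nonempty X] [IsUltrametricDist X]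
    (hX : ∀ p q : X, dist p q ∈ K) (ε : ℝ) (hε : 0 < ε) :
    ∃ δ : ℝ, 0 < δ ∧
      ∃ (Y : ℕ → Type) (mY : ∀ n, MetricSpace (Y n)),
        (∀ n, letI := mY n; CompactSpace (Y n) ∧ Nonempty (Y n) ∧
          IsUltrametricDist (Y n) ∧ ∀ p q : Y n, dist p q ∈ K) ∧
        (∀ n, (letI := mY n; GHuDist X (Y n)) ≤ ε) ∧
        (∀ m n, m ≠ n → δ ≤ (letI := mY m; letI := mY n; GHuDist (Y m) (Y n))) := by
  obtain ⟨a0⟩ := ‹Nonempty X›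
  -- a finite (ε/2)-net of X containing a0
  obtain ⟨t, -, htfin, htcov⟩ :=
    finite_cover_balls_of_compact (isCompact_univ : IsCompact (Set.univ : Set X)) (e := ε / 2) (by linarith)
  classical
  set s : Finset X := insert a0 htfin.toFinset with hs
  have ha0s : a0 ∈ s := Finset.mem_insert_self _ _
  have hnet : ∀ x : X, ∃ a ∈ s, dist x a < ε / 2 := by
    intro x
    have := htcov (mem_univ x)
    simp only [mem_iUnion] at this
    obtain ⟨a, ha, hxa⟩ := this
    exact ⟨a, Finset.mem_insert_of_mem (htfin.mem_toFinset.mpr ha), mem_ball.mp hxa⟩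
  -- minimal positive distance within the net
  set T : Finset ℝ := ((s ×ˢ s).filter fun p => p.1 ≠ p.2).image fun p => dist p.1 p.2 with hT
  have hμ : ∃ μ : ℝ, 0 < μ ∧ ∀ a ∈ s, ∀ b ∈ s, a ≠ b → μ ≤ dist a b := by
    by_cases hTne : T.Nonempty
    · refine ⟨T.min' hTne, ?_, ?_⟩
      · obtain ⟨p, hp, hpe⟩ := Finset.mem_image.mp (T.min'_mem hTne)
        rw [← hpe]
        exact dist_pos.mpr (Finset.mem_filter.mp hp).2
      · intro a ha b hb hab
        exact T.min'_le _ (Finset.mem_image.mpr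
          ⟨(a, b), Finset.mem_filter.mpr ⟨Finset.mem_product.mpr ⟨ha, hb⟩, hab⟩, rfl⟩)
    · refine ⟨1, one_pos, fun a ha b hb hab => absurd ?_ hTne⟩
      exact ⟨dist a b, Finset.mem_image.mpr
        ⟨(a, b), Finset.mem_filter.mpr ⟨Finset.mem_product.mpr ⟨ha, hb⟩, hab⟩, rfl⟩⟩
  obtain ⟨μ, hμ0, hμsep⟩ := hμ
  -- choose c ∈ K, 0 < c < min (ε/2) μ
  obtain ⟨c, hcK, hc0, hclt⟩ := hKacc (min (ε / 2) μ) (lt_min (by linarith) hμ0)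
  have hcε : c < ε / 2 := lt_of_lt_of_le hclt (min_le_left _ _)
  have hcμ : c < μ := lt_of_lt_of_le hclt (min_le_right _ _)
  have hsep : ∀ a ∈ s, ∀ b ∈ s, a ≠ b → c ≤ dist a b :=
    fun a ha b hb hab => le_trans hcμ.le (hμsep a ha b hb hab)
  -- the family of spaces
  refine ⟨c / 2, by linarith, fun n => Ysp s n,
    fun n => @Subtype.metricSpace _ _ (sMS c hc0 a0 n), ?_, ?_, ?_⟩
  · -- each Y n is in U(K)
    intro n
    letI : MetricSpace (X ⊕ Fin n) := sMS c hc0 a0 n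
    haveI : Fintype (Ysp s n) := FinsetCoe.fintype _
    refine ⟨?_, ⟨⟨Sum.inl a0, Finset.mem_disjUnion.mpr
      (Or.inl (Finset.mem_map_of_mem _ ha0s))⟩⟩, ⟨fun x y z => sDist_max hc0.le x.1 y.1 z.1⟩, ?_⟩
    · exact @Finite.compactSpace (Ysp s n)
        (@UniformSpace.toTopologicalSpace _ (@PseudoMetricSpace.toUniformSpace _
          (@MetricSpace.toPseudoMetricSpace _ (@Subtype.metricSpace _ _ (sMS c hc0 a0 n)))))
        (Finite.of_fintype _)
    intro p q
    show sDist c a0 p.1 q.1 ∈ K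
    rcases p.1 with x | i <;> rcases q.1 with y | j
    · exact hX x y
    · rcases max_choice c (dist x a0) with h | h <;> rw [sDist, h]
      exacts [hcK, hX x a0]
    · rcases max_choice c (dist y a0) with h | h <;> rw [sDist, h]
      exacts [hcK, hX y a0]
    · rw [sDist]; split
      exacts [hK0, hcK]
  · -- GHuDist X (Y n) ≤ ε
    intro n
    letI : MetricSpace (X ⊕ Fin n) := sMS c hc0 a0 n
    haveI : IsUltrametricDist (X ⊕ Fin n) := ⟨fun x y z => sDist_max hc0.le x y z⟩
    show GHuDist X (Ysp s n) ≤ ε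
    have hbdd : BddBelow { r : ℝ | ∃ (Z : Type) (_ : MetricSpace Z), IsUltrametricDist Z ∧
        ∃ (i : X → Z) (j : Ysp s n → Z), Isometry i ∧ Isometry j ∧
          Metric.hausdorffDist (Set.range i) (Set.range j) = r } := by
      refine ⟨0, ?_⟩
      rintro r ⟨Z, mZ, hU, i, j, hi, hj, rfl⟩
      exact Metric.hausdorffDist_nonneg
    have hmem : Metric.hausdorffDist (Set.range (Sum.inl : X → X ⊕ Fin n))
        (Set.range (Subtype.val : Ysp s n → X ⊕ Fin n)) ∈ { r : ℝ |
        ∃ (Z : Type) (_ : MetricSpace Z), IsUltrametricDist Z ∧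
        ∃ (i : X → Z) (j : Ysp s n → Z), Isometry i ∧ Isometry j ∧
          Metric.hausdorffDist (Set.range i) (Set.range j) = r } := by
      exact ⟨X ⊕ Fin n, inferInstance, inferInstance, Sum.inl, Subtype.val,
        Isometry.of_dist_eq fun a b => rfl, Isometry.of_dist_eq fun a b => rfl, rfl⟩
    refine le_trans (csInf_le hbdd hmem) ?_
    apply Metric.hausdorffDist_le_of_mem_dist hε.le
    · rintro x ⟨p, rfl⟩
      obtain ⟨a, has, hpa⟩ := hnet p
      refine ⟨Sum.inl a, ⟨⟨Sum.inl a, Finset.mem_disjUnion.mpr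
        (Or.inl (Finset.mem_map_of_mem _ has))⟩, rfl⟩, ?_⟩
      show dist p a ≤ ε
      linarith
    · rintro y ⟨⟨u, hu⟩, rfl⟩
      rcases u with x | i
      · exact ⟨Sum.inl x, ⟨x, rfl⟩, by rw [dist_self]; linarith⟩
      · refine ⟨Sum.inl a0, ⟨a0, rfl⟩, ?_⟩
        show max c (dist a0 a0) ≤ ε
        rw [dist_self, max_eq_left hc0.le]
        linarith
  · -- separation
    intro m n hmn
    letI : MetricSpace (X ⊕ Fin m) := sMS c hc0 a0 m
    letI : MetricSpace (X ⊕ Fin n) := sMS c hc0 a0 n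
    haveI : Fintype (Ysp s m) := FinsetCoe.fintype _
    haveI : Fintype (Ysp s n) := FinsetCoe.fintype _
    haveI : Nonempty (Ysp s m) := ⟨⟨Sum.inl a0, Finset.mem_disjUnion.mpr
      (Or.inl (Finset.mem_map_of_mem _ ha0s))⟩⟩
    haveI : Nonempty (Ysp s n) := ⟨⟨Sum.inl a0, Finset.mem_disjUnion.mpr
      (Or.inl (Finset.mem_map_of_mem _ ha0s))⟩⟩
    show c / 2 ≤ GHuDist (Ysp s m) (Ysp s n)
    have Ysep := fun k => Ysp_sep hc0 hsep (a0 := a0) k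
    apply le_csInf
    · -- nonempty: embed both in X ⊕ Fin (max m n)
      set N := max m n with hN
      letI : MetricSpace (X ⊕ Fin N) := sMS c hc0 a0 N
      exact ⟨_, ⟨X ⊕ Fin N, inferInstance,
        ⟨fun x y z => sDist_max hc0.le x y z⟩, _, _,
        sMap_isometry hc0 (le_max_left m n), sMap_isometry hc0 (le_max_right m n), rfl⟩⟩
    · -- every element of the set is ≥ c/2
      rintro r ⟨Z, mZ, hUZ, i, j, hi, hj, rfl⟩
      by_contra hlt
      push_neg at hlt
      have finE : EMetric.hausdorffEdist (Set.range i) (Set.range j) ≠ ⊤ :=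
        Metric.hausdorffEdist_ne_top_of_nonempty_of_bounded (range_nonempty _)
          (range_nonempty _) (Set.finite_range i).isBounded (Set.finite_range j).isBounded
      have h1 : Fintype.card (Ysp s m) ≤ Fintype.card (Ysp s n) :=
        card_le_of_sep hc0 (fun a a' => Ysep m a a') i j hi finE hlt
      have h2 : Fintype.card (Ysp s n) ≤ Fintype.card (Ysp s m) := by
        rw [Metric.hausdorffDist_comm] at hlt
        rw [EMetric.hausdorffEdist, EMetric.hausdorffEdist_comm] at finE
        exact card_le_of_sep hc0 (fun a a' => Ysep n a a') j i hj finE hlt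
      have hcards : Fintype.card (Ysp s m) = Fintype.card (Ysp s n) := le_antisymm h1 h2
      have hm : Fintype.card (Ysp s m) = s.card + m := by
        rw [Fintype.card_coe]; exact Fnet_card s m
      have hn : Fintype.card (Ysp s n) = s.card + n := by
        rw [Fintype.card_coe]; exact Fnet_card s n
      rw [hm, hn] at hcards
      omega
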